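/- arXiv:2502.09319 — 3 statements merged into one kernel-verified Lean document; each statement's English description precedes it below -/
import Mathlib

section
/- Let m ∈ ℝ^d with m_i > 0, λ > 0, and define M = { μ ∈ ℝ^d : ∑_{i∈S} μ_i m_i ≥ −λ for every subset S ⊆ {1,...,d} }. If μ ∈ M, then the supremum over x ≤ m (coordinatewise) of (min_i x_i/m_i) + (1/λ)⟨μ, x⟩ equals (1/λ)⟨m, μ⟩ + 1, and is attained at x = m. -/
/-- if μ ∈ M (power-set constraints ∑_{i∈S} μ_i m_i ≥ −λ), then
sup_{x ≤ m} [min_i x_i/m_i + (1/λ)⟨μ,x⟩] = (1/λ)⟨m,μ⟩ + 1, attained at x = m. -/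
theorem stmt5 (d : ℕ) (hd : 1 ≤ d) (m μ : Fin d → ℝ) (lam : ℝ)
    (hm : ∀ i, 0 < m i) (hlam : 0 < lam)
    (hμ : ∀ S : Finset (Fin d), -lam ≤ ∑ i ∈ S, μ i * m i) :
    IsGreatest {r : ℝ | ∃ x : Fin d → ℝ, (∀ i, x i ≤ m i) ∧
        r = Finset.univ.inf' ⟨⟨0, hd⟩, Finset.mem_univ _⟩ (fun i => x i / m i)
          + (1 / lam) * ∑ i, μ i * x i}
      ((1 / lam) * (∑ i, m i * μ i) + 1) ∧
    Finset.univ.inf' ⟨⟨0, hd⟩, Finset.mem_univ _⟩ (fun i => m i / m i)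
      + (1 / lam) * ∑ i, μ i * m i = (1 / lam) * (∑ i, m i * μ i) + 1 := by
  have hinf1 : Finset.univ.inf' ⟨⟨0, hd⟩, Finset.mem_univ _⟩ (fun i => m i / m i) = 1 := by
    rw [show (fun i : Fin d => m i / m i) = fun _ => (1:ℝ) from
      funext fun i => div_self (hm i).ne']
    exact Finset.inf'_const _ _
  have hsumc : ∑ i, μ i * m i = ∑ i, m i * μ i := by
    exact Finset.sum_congr rfl fun i _ => mul_comm _ _
  have hattain : Finset.univ.inf' ⟨⟨0, hd⟩, Finset.mem_univ _⟩ (fun i => m i / m i)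
      + (1 / lam) * ∑ i, μ i * m i = (1 / lam) * (∑ i, m i * μ i) + 1 := by
    rw [hinf1, hsumc]; ring
  refine ⟨⟨⟨m, fun i => le_refl _, hattain.symm⟩, ?_⟩, hattain⟩
  rintro r ⟨x, hx, rfl⟩
  set t := Finset.univ.inf' ⟨⟨0, hd⟩, Finset.mem_univ _⟩ (fun i => x i / m i) with ht
  have htle : ∀ i, t * m i ≤ x i := by
    intro i
    have h := Finset.inf'_le (f := fun i => x i / m i) (Finset.mem_univ i)
    calc t * m i ≤ (x i / m i) * m i := mul_le_mul_of_nonneg_right h (hm i).le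
      _ = x i := div_mul_cancel₀ _ (hm i).ne'
  have ht1 : t ≤ 1 := by
    have h := Finset.inf'_le (f := fun i => x i / m i) (Finset.mem_univ ⟨0, hd⟩)
    have h2 : x ⟨0, hd⟩ / m ⟨0, hd⟩ ≤ 1 := (div_le_one (hm _)).mpr (hx _)
    exact le_trans h h2
  set S := Finset.univ.filter (fun i => μ i < 0) with hS
  have key : ∑ i, μ i * (x i - m i) ≤ lam * (1 - t) := by
    have h1 : ∑ i ∈ S, μ i * (x i - m i)
        + ∑ i ∈ Finset.univ.filter (fun i => ¬ μ i < 0), μ i * (x i - m i)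
        = ∑ i, μ i * (x i - m i) := Finset.sum_filter_add_sum_filter_not _ _ _
    have h2 : ∑ i ∈ Finset.univ.filter (fun i => ¬ μ i < 0), μ i * (x i - m i) ≤ 0 := by
      apply Finset.sum_nonpos
      intro i hi
      rw [Finset.mem_filter] at hi
      exact mul_nonpos_of_nonneg_of_nonpos (not_lt.mp hi.2) (by linarith [hx i])
    have h3 : ∑ i ∈ S, μ i * (x i - m i) ≤ ∑ i ∈ S, μ i * ((t - 1) * m i) := by
      apply Finset.sum_le_sum
      intro i hi
      rw [hS, Finset.mem_filter] at hi
      have h4 : (t - 1) * m i ≤ x i - m i := by nlinarith [htle i]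
      exact mul_le_mul_of_nonpos_left h4 hi.2.le
    have h5 : ∑ i ∈ S, μ i * ((t - 1) * m i) = (t - 1) * ∑ i ∈ S, μ i * m i := by
      rw [Finset.mul_sum]; exact Finset.sum_congr rfl fun i _ => by ring
    have h6 : (t - 1) * ∑ i ∈ S, μ i * m i ≤ (t - 1) * (-lam) :=
      mul_le_mul_of_nonpos_left (hμ S) (by linarith)
    nlinarith [h1, h2, h3, h5, h6]
  have hsum : ∑ i, μ i * (x i - m i) = ∑ i, μ i * x i - ∑ i, m i * μ i := by
    rw [← hsumc, ← Finset.sum_sub_distrib]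
    exact Finset.sum_congr rfl fun i _ => by ring
  rw [hsum] at key
  have hmul := mul_le_mul_of_nonneg_left key (by positivity : (0:ℝ) ≤ 1 / lam)
  have heq : (1 / lam) * (lam * (1 - t)) = 1 - t := by
    field_simp
  rw [heq, mul_sub] at hmul
  linarith
end

section
/- Let m ∈ ℝ^d with m_i > 0, λ > 0, and define M = { μ ∈ ℝ^d : ∑_{i∈S} μ_i m_i ≥ −λ for all S ⊆ {1,...,d} }. If μ ∉ M, then sup_{x ≤ m} [min_i (x_i/m_i) + (1/λ)⟨μ, x⟩] = +∞. -/
/-- if μ ∉ M, then sup_{x ≤ m}[min_i x_i/m_i + (1/λ)⟨μ,x⟩] = +∞,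
i.e. the set of attainable values is unbounded above. -/
theorem stmt6 (d : ℕ) (hd : 1 ≤ d) (m μ : Fin d → ℝ) (lam : ℝ)
    (hm : ∀ i, 0 < m i) (hlam : 0 < lam)
    (hμ : ¬ ∀ S : Finset (Fin d), -lam ≤ ∑ i ∈ S, μ i * m i) :
    ¬ BddAbove {r : ℝ | ∃ x : Fin d → ℝ, (∀ i, x i ≤ m i) ∧
        r = Finset.univ.inf' ⟨⟨0, hd⟩, Finset.mem_univ _⟩ (fun i => x i / m i)
          + (1 / lam) * ∑ i, μ i * x i} := by
  rintro ⟨b, hb⟩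
  push_neg at hμ
  obtain ⟨S, hS⟩ := hμ
  set c := ∑ i ∈ S, μ i * m i with hc
  have hSne : S.Nonempty := by
    rcases S.eq_empty_or_nonempty with h | h
    · rw [hc, h] at hS; simp at hS; linarith
    · exact h
  obtain ⟨i₀, hi₀⟩ := hSne
  set D := ∑ i ∈ Sᶜ, μ i * m i with hD
  have hk : 1 + c / lam < 0 := by
    have : c / lam < -1 := by rw [div_lt_iff₀ hlam]; linarith
    linarith
  set k := 1 + c / lam with hkdef
  set t := min 1 ((b + 1 - D / lam) / k) with htdef
  have ht1 : t ≤ 1 := min_le_left _ _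
  have ht2 : b + 1 ≤ t * k + D / lam := by
    have h1 : t ≤ (b + 1 - D / lam) / k := min_le_right _ _
    rw [le_div_iff_of_neg hk] at h1
    linarith
  set x : Fin d → ℝ := fun i => if i ∈ S then t * m i else m i with hx
  have hxle : ∀ i, x i ≤ m i := by
    intro i
    by_cases h : i ∈ S
    · simp only [hx, h, if_true]
      nlinarith [hm i]
    · simp [hx, h]
  have hsum : ∑ i, μ i * x i = t * c + D := by
    rw [← Finset.sum_add_sum_compl S]
    congr 1
    · rw [hc, Finset.mul_sum]
      apply Finset.sum_congr rfl
      intro i hi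
      simp only [hx, hi, if_true]; ring
    · apply Finset.sum_congr rfl
      intro i hi
      simp only [Finset.mem_compl] at hi
      simp [hx, hi]
  have hinf : Finset.univ.inf' ⟨⟨0, hd⟩, Finset.mem_univ _⟩ (fun i => x i / m i) = t := by
    apply le_antisymm
    · calc Finset.univ.inf' ⟨⟨0, hd⟩, Finset.mem_univ _⟩ (fun i => x i / m i)
            ≤ x i₀ / m i₀ := Finset.inf'_le _ (Finset.mem_univ i₀)
        _ = t := by simp [hx, hi₀, mul_div_assoc, div_self (hm i₀).ne']
    · apply Finset.le_inf'
      intro i _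
      by_cases h : i ∈ S
      · simp [hx, h, mul_div_assoc, div_self (hm i).ne']
      · simp only [hx, h, if_false]
        rw [div_self (hm i).ne']
        exact ht1
  have hmem : t * k + D / lam ∈ {r : ℝ | ∃ x : Fin d → ℝ, (∀ i, x i ≤ m i) ∧
        r = Finset.univ.inf' ⟨⟨0, hd⟩, Finset.mem_univ _⟩ (fun i => x i / m i)
          + (1 / lam) * ∑ i, μ i * x i} := by
    refine ⟨x, hxle, ?_⟩
    rw [hinf, hsum, hkdef]
    field_simp
    ring
  have := hb hmem
  linarith
end

section
/- Define s(v) = sup_{z ≤ 0} [min_i z_i + ⟨z, v⟩] for v ∈ ℝ^d, where z ≤ 0 means z_i ≤ 0 for all i. If ∑_{i∈S} v_i ≥ −1 for every subset S ⊆ {1,...,d}, then s(v) = 0. -/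
lemma stmt7_aux (d : ℕ) (hd : 1 ≤ d) (v : Fin d → ℝ)
    (hv : ∀ S : Finset (Fin d), -1 ≤ ∑ i ∈ S, v i) :
    ∀ n (z : Fin d → ℝ), (Finset.univ.filter (fun i => z i ≠ 0)).card ≤ n →
      (∀ i, z i ≤ 0) →
      Finset.univ.inf' ⟨⟨0, hd⟩, Finset.mem_univ _⟩ z + ∑ i, z i * v i ≤ 0 := by
  intro n
  induction n with
  | zero =>
    intro z hcard hz
    have hz0 : ∀ i, z i = 0 := by
      intro i
      by_contra h
      have hmem : i ∈ Finset.univ.filter (fun i => z i ≠ 0) := by simp [h]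
      have := Finset.card_pos.mpr ⟨i, hmem⟩
      omega
    simp [hz0]
    exact (Finset.inf'_le z (Finset.mem_univ _)).trans (hz ⟨0, hd⟩)
  | succ n ih =>
    intro z hcard hz
    set S := Finset.univ.filter (fun i => z i ≠ 0) with hSdef
    by_cases hS : S.Nonempty
    · set m := S.sup' hS z with hmdef
      obtain ⟨i0, hi0, hm⟩ := S.exists_mem_eq_sup' hS z
      set z' := fun i => if i ∈ S then z i - m else 0 with hz'def
      have hzle : ∀ i ∈ S, z i ≤ m := fun i hi => Finset.le_sup' z hi
      have hm0 : m ≤ 0 := by rw [hmdef, hm]; exact hz i0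
      have hz'le : ∀ i, z' i ≤ 0 := by
        intro i
        simp only [hz'def]
        split
        · linarith [hzle i (by assumption)]
        · exact le_refl 0
      have hinfz_le : Finset.univ.inf' ⟨⟨0, hd⟩, Finset.mem_univ _⟩ z ≤ m := by
        rw [hmdef, hm]; exact Finset.inf'_le z (Finset.mem_univ i0)
      have hsub : Finset.univ.filter (fun i => z' i ≠ 0) ⊆ S.erase i0 := by
        intro i hi
        simp only [Finset.mem_filter] at hi
        rcases hi with ⟨-, hi⟩
        by_cases h1 : i ∈ S
        · refine Finset.mem_erase.mpr ⟨?_, h1⟩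
          rintro rfl
          apply hi
          simp only [hz'def, h1, if_true, hmdef, hm]
          ring
        · exact absurd (by simp [hz'def, h1]) hi
      have hcard' : (Finset.univ.filter (fun i => z' i ≠ 0)).card ≤ n := by
        have h1 := Finset.card_le_card hsub
        have h2 : (S.erase i0).card = S.card - 1 := Finset.card_erase_of_mem hi0
        have h3 : 1 ≤ S.card := Finset.card_pos.mpr hS
        omega
      have hsum : ∑ i, z i * v i = ∑ i, z' i * v i + m * ∑ i ∈ S, v i := by
        have key : ∀ i, z i * v i = z' i * v i + (if i ∈ S then m * v i else 0) := by
          intro i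
          by_cases h : i ∈ S
          · simp only [hz'def, h, if_true]; ring
          · have hz0 : z i = 0 := by
              by_contra hne
              exact h (by simp [hSdef, hne])
            simp [hz'def, h, hz0]
        rw [Finset.sum_congr rfl (fun i _ => key i), Finset.sum_add_distrib]
        congr 1
        rw [Finset.sum_ite_mem, Finset.univ_inter, Finset.mul_sum]
      have hinf' : Finset.univ.inf' ⟨⟨0, hd⟩, Finset.mem_univ _⟩ z ≤
          Finset.univ.inf' ⟨⟨0, hd⟩, Finset.mem_univ _⟩ z' + m := by
        rw [← sub_le_iff_le_add]
        apply Finset.le_inf'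
        intro i _
        by_cases h : i ∈ S
        · have h1 : Finset.univ.inf' ⟨⟨0, hd⟩, Finset.mem_univ _⟩ z ≤ z i :=
            Finset.inf'_le z (Finset.mem_univ i)
          simp only [hz'def, h, if_true]
          linarith
        · simp only [hz'def, h, if_false]
          linarith
      have hmsum : m * ∑ i ∈ S, v i ≤ -m := by
        have h1 := hv S
        nlinarith
      have hih := ih z' hcard' hz'le
      rw [hsum]
      linarith
    · have hz0 : ∀ i, z i = 0 := by
        intro i
        by_contra h
        exact hS ⟨i, by simp [hSdef, h]⟩
      simp [hz0]
      exact (Finset.inf'_le z (Finset.mem_univ _)).trans (hz ⟨0, hd⟩)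

/-- if ∑_{i∈S} v_i ≥ −1 for every subset S, then
s(v) = sup_{z ≤ 0}[min_i z_i + ⟨z,v⟩] = 0 (attained at z = 0). -/
theorem stmt7 (d : ℕ) (hd : 1 ≤ d) (v : Fin d → ℝ)
    (hv : ∀ S : Finset (Fin d), -1 ≤ ∑ i ∈ S, v i) :
    IsGreatest {r : ℝ | ∃ z : Fin d → ℝ, (∀ i, z i ≤ 0) ∧
        r = Finset.univ.inf' ⟨⟨0, hd⟩, Finset.mem_univ _⟩ z + ∑ i, z i * v i}
      0 := by
  constructor
  · exact ⟨fun _ => 0, fun i => le_refl 0, by simp; exact (Finset.inf'_const _ _).symm⟩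
  · rintro r ⟨z, hz, rfl⟩
    exact stmt7_aux d hd v hv _ z le_rfl hz
end
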